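/- Consider the optimal k-means clustering function F (returning a cost-minimizing k-clustering). If (X,d) is (δ, c, c₀, k)-uniquely optimal, then (X,d) is (ε, δ, k)-additive perturbation robust with respect to F for every ε < min((c−1)/2, (−M + √(M² + 4Mc₀))/(2M)), where M = C(n,2) and n = |X|. -/

import Mathlib

open Finset

def IsDissim {X : Type*} (d : X → X → ℝ) : Prop :=
  (∀ x y, d x y = d y x) ∧ (∀ x, d x x = 0) ∧ (∀ x y, 0 ≤ d x y)

open Classical in
noncomputable def clDist {X : Type*} [Fintype X] {k l : ℕ}
    (c : X → Fin k) (c' : X → Fin l) : ℝ :=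
  ((Finset.univ.filter fun p : X × X =>
      p.1 ≠ p.2 ∧ ¬((c p.1 = c p.2) ↔ (c' p.1 = c' p.2))).card : ℝ) /
    ((Fintype.card X : ℝ) * ((Fintype.card X : ℝ) - 1))

/-- The `k`-means cost of a clustering `c` of `(X, d)`:
`∑ i, (1/|Cᵢ|) ∑_{{x,y} ⊆ Cᵢ} d(x,y)²` (each unordered pair counted once). -/
noncomputable def kmeansCost {X : Type*} [Fintype X] {k : ℕ}
    (d : X → X → ℝ) (c : X → Fin k) : ℝ :=
  ∑ i : Fin k,
    (1 / ((Finset.univ.filter fun x => c x = i).card : ℝ)) *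
      ((1 : ℝ) / 2 *
        ∑ x ∈ Finset.univ.filter (fun x => c x = i),
          ∑ y ∈ Finset.univ.filter (fun y => c y = i), d x y ^ 2)

open Classical in
noncomputable def pairWeight {X : Type*} [Fintype X] {k : ℕ} (c : X → Fin k) (x y : X) : ℝ :=
  if c x = c y ∧ x ≠ y then
    ((2 : ℝ) * ((Finset.univ.filter fun z => c z = c x).card : ℝ))⁻¹ else 0

lemma pairWeight_nonneg {X : Type*} [Fintype X] {k : ℕ} (c : X → Fin k) (x y : X) :
    0 ≤ pairWeight c x y := by
  unfold pairWeight
  split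
  · positivity
  · exact le_rfl

lemma kmeansCost_eq_sum {X : Type*} [Fintype X] {k : ℕ} (e : X → X → ℝ)
    (he : ∀ x, e x x = 0) (c : X → Fin k) :
    kmeansCost e c = ∑ p : X × X, pairWeight c p.1 p.2 * e p.1 p.2 ^ 2 := by
  classical
  rw [Fintype.sum_prod_type, ← Finset.sum_fiberwise univ c
    (fun x => ∑ y, pairWeight c x y * e x y ^ 2)]
  unfold kmeansCost
  refine Finset.sum_congr rfl fun i _ => ?_
  have step : ∀ x ∈ univ.filter (fun x => c x = i),
      (∑ y, pairWeight c x y * e x y ^ 2)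
        = ∑ y ∈ univ.filter (fun y => c y = i),
            ((2 : ℝ) * ((univ.filter fun z => c z = i).card : ℝ))⁻¹ * e x y ^ 2 := by
    intro x hx
    have hcx : c x = i := (Finset.mem_filter.1 hx).2
    rw [Finset.sum_filter]
    refine Finset.sum_congr rfl fun y _ => ?_
    unfold pairWeight
    by_cases hy : c y = i
    · by_cases hxy : x = y
      · subst hxy
        simp [he, hcx]
      · simp [hcx, hy, hxy]
    · have : ¬ (c x = c y) := by rw [hcx]; exact fun h => hy h.symm
      simp [this, hy]
  rw [Finset.sum_congr rfl step]
  simp only [← Finset.mul_sum]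
  ring

lemma sum_pairWeight {X : Type*} [Fintype X] {k : ℕ} (c : X → Fin k)
    (hc : Function.Surjective c) :
    ∑ p : X × X, pairWeight c p.1 p.2 = ((Fintype.card X : ℝ) - k) / 2 := by
  classical
  have hN : ∀ i : Fin k, (0:ℝ) < ((univ.filter fun z => c z = i).card : ℝ) := by
    intro i
    obtain ⟨x, hx⟩ := hc i
    have : x ∈ univ.filter fun z => c z = i := by simp [hx]
    exact_mod_cast Finset.card_pos.2 ⟨x, this⟩
  have inner : ∀ x : X, (∑ y, pairWeight c x y)
      = (((univ.filter fun z => c z = c x).card : ℝ) - 1) *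
          ((2 : ℝ) * ((univ.filter fun z => c z = c x).card : ℝ))⁻¹ := by
    intro x
    unfold pairWeight
    rw [Finset.sum_ite, Finset.sum_const_zero, add_zero]
    simp only [Finset.sum_const, nsmul_eq_mul]
    have hset : (univ.filter fun y => c x = c y ∧ x ≠ y)
        = (univ.filter fun z => c z = c x).erase x := by
      ext y
      simp only [Finset.mem_filter, Finset.mem_univ, Finset.mem_erase, true_and]
      constructor
      · rintro ⟨h1, h2⟩; exact ⟨fun h => h2 h.symm, h1.symm⟩
      · rintro ⟨h1, h2⟩; exact ⟨h2.symm, fun h => h1 h.symm⟩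
    rw [hset, Finset.card_erase_of_mem (by simp)]
    have hpos : 0 < (univ.filter fun z => c z = c x).card := by
      exact_mod_cast hN (c x)
    rw [Nat.cast_sub hpos]
    simp
  rw [Fintype.sum_prod_type, Finset.sum_congr rfl (fun x _ => inner x),
    ← Finset.sum_fiberwise univ c (fun x =>
      (((univ.filter fun z => c z = c x).card : ℝ) - 1) *
        ((2 : ℝ) * ((univ.filter fun z => c z = c x).card : ℝ))⁻¹)]
  have fib : ∀ i : Fin k, (∑ x ∈ univ.filter (fun x => c x = i),
      (((univ.filter fun z => c z = c x).card : ℝ) - 1) *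
        ((2 : ℝ) * ((univ.filter fun z => c z = c x).card : ℝ))⁻¹)
      = (((univ.filter fun z => c z = i).card : ℝ) - 1) / 2 := by
    intro i
    have : ∀ x ∈ univ.filter (fun x => c x = i),
        (((univ.filter fun z => c z = c x).card : ℝ) - 1) *
          ((2 : ℝ) * ((univ.filter fun z => c z = c x).card : ℝ))⁻¹
        = (((univ.filter fun z => c z = i).card : ℝ) - 1) *
          ((2 : ℝ) * ((univ.filter fun z => c z = i).card : ℝ))⁻¹ := by
      intro x hx
      rw [(Finset.mem_filter.1 hx).2]
    rw [Finset.sum_congr rfl this, Finset.sum_const, nsmul_eq_mul]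
    have h0 := hN i
    field_simp
  rw [Finset.sum_congr rfl (fun i _ => fib i)]
  have hcard : ((Fintype.card X : ℝ)) = ∑ i : Fin k, ((univ.filter fun z => c z = i).card : ℝ) := by
    rw [← Nat.cast_sum]
    norm_cast
    rw [← Finset.card_univ]
    exact Finset.card_eq_sum_card_fiberwise (fun x _ => Finset.mem_univ (c x))
  rw [hcard, ← Finset.sum_div, Finset.sum_sub_distrib, Finset.sum_const, Finset.card_univ,
    Fintype.card_fin, nsmul_eq_mul, mul_one]

lemma flat_bound {ι : Type*} (s : Finset ι) (w f g : ι → ℝ) (ε : ℝ) (hε : 0 ≤ ε)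
    (hw : ∀ p ∈ s, 0 ≤ w p) (hf0 : ∀ p ∈ s, 0 ≤ f p) (hfg : ∀ p ∈ s, f p ≤ g p + ε) :
    ∑ p ∈ s, w p * f p ^ 2
      ≤ (Real.sqrt (∑ p ∈ s, w p * g p ^ 2) + ε * Real.sqrt (∑ p ∈ s, w p)) ^ 2 := by
  set Q := ∑ p ∈ s, w p * g p ^ 2 with hQ
  set W := ∑ p ∈ s, w p with hW
  have hQ0 : 0 ≤ Q := Finset.sum_nonneg fun p hp => mul_nonneg (hw p hp) (sq_nonneg _)
  have hW0 : 0 ≤ W := Finset.sum_nonneg hw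
  have h1 : ∑ p ∈ s, w p * f p ^ 2
      ≤ Q + 2 * ε * (∑ p ∈ s, w p * g p) + ε ^ 2 * W := by
    have : ∀ p ∈ s, w p * f p ^ 2 ≤ w p * g p ^ 2 + 2 * ε * (w p * g p) + ε ^ 2 * w p := by
      intro p hp
      have hsq : f p ^ 2 ≤ (g p + ε) ^ 2 := pow_le_pow_left₀ (hf0 p hp) (hfg p hp) 2
      nlinarith [hw p hp, hsq]
    calc ∑ p ∈ s, w p * f p ^ 2
        ≤ ∑ p ∈ s, (w p * g p ^ 2 + 2 * ε * (w p * g p) + ε ^ 2 * w p) :=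
          Finset.sum_le_sum this
      _ = Q + 2 * ε * (∑ p ∈ s, w p * g p) + ε ^ 2 * W := by
          rw [Finset.sum_add_distrib, Finset.sum_add_distrib, ← Finset.mul_sum, ← Finset.mul_sum]
  have hCS : (∑ p ∈ s, w p * g p) ≤ Real.sqrt Q * Real.sqrt W := by
    have h2 : (∑ p ∈ s, w p * g p) ^ 2 ≤ Q * W := by
      have : ∀ p ∈ s, w p * g p = (Real.sqrt (w p) * g p) * Real.sqrt (w p) := by
        intro p hp
        rw [mul_comm (Real.sqrt (w p) * g p), ← mul_assoc, Real.mul_self_sqrt (hw p hp)]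
      rw [Finset.sum_congr rfl this]
      calc (∑ p ∈ s, (Real.sqrt (w p) * g p) * Real.sqrt (w p)) ^ 2
          ≤ (∑ p ∈ s, (Real.sqrt (w p) * g p) ^ 2) * (∑ p ∈ s, Real.sqrt (w p) ^ 2) :=
            Finset.sum_mul_sq_le_sq_mul_sq s _ _
        _ = Q * W := by
            congr 1
            · refine Finset.sum_congr rfl fun p hp => ?_
              rw [mul_pow, Real.sq_sqrt (hw p hp)]
            · exact Finset.sum_congr rfl fun p hp => Real.sq_sqrt (hw p hp)
    calc (∑ p ∈ s, w p * g p) ≤ |∑ p ∈ s, w p * g p| := le_abs_self _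
      _ = Real.sqrt ((∑ p ∈ s, w p * g p) ^ 2) := (Real.sqrt_sq_eq_abs _).symm
      _ ≤ Real.sqrt (Q * W) := Real.sqrt_le_sqrt h2
      _ = Real.sqrt Q * Real.sqrt W := Real.sqrt_mul hQ0 _
  have e1 : Real.sqrt Q ^ 2 = Q := Real.sq_sqrt hQ0
  have e2 : Real.sqrt W ^ 2 = W := Real.sq_sqrt hW0
  nlinarith [h1, hCS, hε]

lemma clDist_eq_zero {X : Type*} [Fintype X] {k l : ℕ}
    (c : X → Fin k) (c' : X → Fin l)
    (h : ∀ p : X × X, (c p.1 = c p.2) ↔ (c' p.1 = c' p.2)) :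
    clDist c c' = 0 := by
  classical
  unfold clDist
  rw [Finset.filter_false_of_mem, Finset.card_empty]
  · simp
  · intro p _ hp
    exact hp.2 (h p)

lemma key2_aux (ε Wr M nr kr : ℝ) (hε : 0 ≤ ε) (hWr : Wr = (nr - kr) / 2)
    (hkr2 : 2 ≤ kr) (hknr : kr ≤ nr) (hMr : M = nr * (nr - 1) / 2) :
    2 * ε * Wr + 4 * ε ^ 2 * Wr ≤ M * ε + M * ε ^ 2 := by
  subst hWr hMr
  have h4 : 4 * (nr - 2) ≤ nr * (nr - 1) := by nlinarith [sq_nonneg (2 * nr - 5)]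
  have hco : (0:ℝ) ≤ ε + 2 * ε ^ 2 := by positivity
  have hco2 : (0:ℝ) ≤ (ε + ε ^ 2) / 2 := by positivity
  have hsub : nr - kr ≤ nr - 2 := by linarith
  have t1 := mul_le_mul_of_nonneg_left hsub hco
  have t2 := mul_le_mul_of_nonneg_left h4 hco2
  have t3 : (0:ℝ) ≤ ε * (nr - 2) := mul_nonneg hε (by linarith)
  nlinarith [t1, t2, t3]

lemma final_aux (A S Wr M cc c₀ ε : ℝ) (hA3 : A ≤ S + 2 * ε * (S + Wr) + 4 * ε ^ 2 * Wr)
    (key2 : 2 * ε * Wr + 4 * ε ^ 2 * Wr ≤ M * ε + M * ε ^ 2)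
    (hc₀ : M * ε + M * ε ^ 2 < c₀) (hSnn : 0 ≤ S) (hcc : 1 + 2 * ε < cc) :
    A ≤ cc * S + c₀ := by
  nlinarith [mul_nonneg (by linarith : (0:ℝ) ≤ cc - (1 + 2 * ε)) hSnn]

/-- If `(X, d)` is `(δ, c, c₀, k)`-uniquely optimal for the optimal `k`-means clustering
function `F`, then `(X, d)` is `(ε, δ, k)`-additive perturbation robust for every
`ε < min((c-1)/2, (-M + √(M² + 4·M·c₀))/(2M))`, where `M = C(n,2)`. -/
theorem kmeans_uniquely_optimal_implies_additive_robust
    {X : Type*} [Fintype X] {k : ℕ}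
    (F : (X → X → ℝ) → (X → Fin k))
    (hF : ∀ e : X → X → ℝ, IsDissim e → Function.Surjective (F e) ∧
      ∀ c : X → Fin k, Function.Surjective c → kmeansCost e (F e) ≤ kmeansCost e c)
    (d : X → X → ℝ) (hd : IsDissim d)
    (δ cc c₀ : ℝ) (M : ℝ) (hM : M = (Nat.choose (Fintype.card X) 2 : ℝ))
    (hUO : ∀ c : X → Fin k, Function.Surjective c →
      kmeansCost d c ≤ cc * kmeansCost d (F d) + c₀ → clDist (F d) c < δ)
    (ε : ℝ) (hε : 0 < ε)
    (hεbound : ε < min ((cc - 1) / 2) ((-M + Real.sqrt (M ^ 2 + 4 * M * c₀)) / (2 * M))) :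
    ∀ d' : X → X → ℝ, IsDissim d' → (∀ x y, |d' x y - d x y| ≤ ε) →
      clDist (F d) (F d') < δ := by
  intro d' hd' hpert
  obtain ⟨hεb1, hεb2⟩ := lt_min_iff.1 hεbound
  have hcc : 1 + 2 * ε < cc := by linarith
  have hMnn : (0:ℝ) ≤ M := by rw [hM]; positivity
  have hMpos : 0 < M := by
    rcases hMnn.eq_or_lt with h | h
    · exfalso
      rw [← h] at hεb2
      norm_num [Real.sqrt_zero] at hεb2
      linarith
    · exact h
  have hc₀ : M * ε + M * ε ^ 2 < c₀ := by
    have h2M : (0:ℝ) < 2 * M := by linarith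
    rw [lt_div_iff₀ h2M] at hεb2
    have hlt : M + 2 * M * ε < Real.sqrt (M ^ 2 + 4 * M * c₀) := by linarith
    have hsq : (M + 2 * M * ε) ^ 2 < M ^ 2 + 4 * M * c₀ :=
      (Real.lt_sqrt (by nlinarith)).1 hlt
    nlinarith
  have hc₀pos : 0 < c₀ := by nlinarith
  -- nonnegativity of costs
  have cost_nn : ∀ (e : X → X → ℝ), IsDissim e → ∀ c : X → Fin k, 0 ≤ kmeansCost e c := by
    intro e he c
    rw [kmeansCost_eq_sum e he.2.1 c]
    exact Finset.sum_nonneg fun p _ => mul_nonneg (pairWeight_nonneg c p.1 p.2) (sq_nonneg _)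
  have hFd := hF d hd
  have hSnn : 0 ≤ kmeansCost d (F d) := cost_nn d hd (F d)
  have hδ : 0 < δ := by
    have h0 := hUO (F d) hFd.1 (by nlinarith)
    have h1 : clDist (F d) (F d) = 0 := clDist_eq_zero _ _ fun p => Iff.rfl
    rw [h1] at h0
    exact h0
  have hn2 : 2 ≤ Fintype.card X := by
    by_contra h
    push_neg at h
    have : Nat.choose (Fintype.card X) 2 = 0 := Nat.choose_eq_zero_of_lt h
    rw [hM, this] at hMpos
    norm_num at hMpos
  rcases Nat.lt_or_ge k 2 with hk | hk
  · interval_cases k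
    · have hne : Nonempty X := Fintype.card_pos_iff.mp (by omega)
      exact (F d hne.some).elim0
    · have h1 : clDist (F d) (F d') = 0 := by
        refine clDist_eq_zero _ _ fun p => ?_
        simp [Subsingleton.elim (F d p.1) (F d p.2), Subsingleton.elim (F d' p.1) (F d' p.2)]
      rw [h1]
      exact hδ
  -- main case : 2 ≤ k
  · have hFd' := hF d' hd'
    have hkn : k ≤ Fintype.card X := by
      simpa using Fintype.card_le_of_surjective (F d) hFd.1
    set nr : ℝ := (Fintype.card X : ℝ) with hnr
    set kr : ℝ := (k : ℝ) with hkr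
    have hkr2 : (2:ℝ) ≤ kr := by rw [hkr]; exact_mod_cast hk
    have hknr : kr ≤ nr := by rw [hkr, hnr]; exact_mod_cast hkn
    have hnr2 : (2:ℝ) ≤ nr := by rw [hnr]; exact_mod_cast hn2
    set Wr : ℝ := (nr - kr) / 2 with hWr
    have hWnn : 0 ≤ Wr := by rw [hWr]; linarith
    have hW1 : ∑ p : X × X, pairWeight (F d) p.1 p.2 = Wr := sum_pairWeight (F d) hFd.1
    have hW2 : ∑ p : X × X, pairWeight (F d') p.1 p.2 = Wr := sum_pairWeight (F d') hFd'.1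
    set S := kmeansCost d (F d) with hS
    set A := kmeansCost d (F d') with hA0
    set B := kmeansCost d' (F d') with hB0
    set C := kmeansCost d' (F d) with hC0
    have hBC : B ≤ C := hFd'.2 (F d) hFd.1
    have hBnn : 0 ≤ B := cost_nn d' hd' (F d')
    have hCnn : 0 ≤ C := cost_nn d' hd' (F d)
    clear_value nr kr Wr S B C
    have hA : A ≤ (Real.sqrt B + ε * Real.sqrt Wr) ^ 2 := by
      have := flat_bound (Finset.univ : Finset (X × X))
        (fun p => pairWeight (F d') p.1 p.2) (fun p => d p.1 p.2) (fun p => d' p.1 p.2)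
        ε hε.le (fun p _ => pairWeight_nonneg _ _ _) (fun p _ => hd.2.2 _ _)
        (fun p _ => by have := abs_le.1 (hpert p.1 p.2); linarith [this.1])
      rw [hW2] at this
      rw [hA0, kmeansCost_eq_sum d hd.2.1, hB0, kmeansCost_eq_sum d' hd'.2.1]
      exact this
    have hC2 : C ≤ (Real.sqrt S + ε * Real.sqrt Wr) ^ 2 := by
      have := flat_bound (Finset.univ : Finset (X × X))
        (fun p => pairWeight (F d) p.1 p.2) (fun p => d' p.1 p.2) (fun p => d p.1 p.2)
        ε hε.le (fun p _ => pairWeight_nonneg _ _ _) (fun p _ => hd'.2.2 _ _)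
        (fun p _ => by have := abs_le.1 (hpert p.1 p.2); linarith [this.2])
      rw [hW1] at this
      rw [hC0, kmeansCost_eq_sum d' hd'.2.1, hS, kmeansCost_eq_sum d hd.2.1]
      exact this
    have hsB : Real.sqrt B ≤ Real.sqrt S + ε * Real.sqrt Wr := by
      calc Real.sqrt B ≤ Real.sqrt C := Real.sqrt_le_sqrt hBC
        _ ≤ Real.sqrt ((Real.sqrt S + ε * Real.sqrt Wr) ^ 2) := Real.sqrt_le_sqrt hC2
        _ = Real.sqrt S + ε * Real.sqrt Wr := Real.sqrt_sq (by positivity)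
    have hA2 : A ≤ (Real.sqrt S + 2 * ε * Real.sqrt Wr) ^ 2 := by
      have hmono : (Real.sqrt B + ε * Real.sqrt Wr) ^ 2
          ≤ (Real.sqrt S + 2 * ε * Real.sqrt Wr) ^ 2 := by
        apply pow_le_pow_left₀ (by positivity)
        · linarith
      linarith
    have eS : Real.sqrt S ^ 2 = S := Real.sq_sqrt hSnn
    have eW : Real.sqrt Wr ^ 2 = Wr := Real.sq_sqrt hWnn
    have eab : 2 * (Real.sqrt S * Real.sqrt Wr) ≤ S + Wr := by
      have h := two_mul_le_add_sq (Real.sqrt S) (Real.sqrt Wr)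
      rw [eS, eW] at h
      linarith
    have hA3 : A ≤ S + 2 * ε * (S + Wr) + 4 * ε ^ 2 * Wr := by
      have expand : (Real.sqrt S + 2 * ε * Real.sqrt Wr) ^ 2
          = Real.sqrt S ^ 2 + 2 * ε * (2 * (Real.sqrt S * Real.sqrt Wr))
            + 4 * ε ^ 2 * Real.sqrt Wr ^ 2 := by ring
      rw [eS, eW] at expand
      have h2 := mul_le_mul_of_nonneg_left eab (by positivity : (0:ℝ) ≤ 2 * ε)
      rw [expand] at hA2
      linarith
    have hMr : M = nr * (nr - 1) / 2 := by rw [hM, Nat.cast_choose_two, hnr]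
    have key2 : 2 * ε * Wr + 4 * ε ^ 2 * Wr ≤ M * ε + M * ε ^ 2 :=
      key2_aux ε Wr M nr kr hε.le hWr hkr2 hknr hMr
    have hfinal : A ≤ cc * S + c₀ := final_aux A S Wr M cc c₀ ε hA3 key2 hc₀ hSnn hcc
    exact hUO (F d') hFd'.1 hfinal
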